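/- Let $Q = [Q_1\ Q_2] \in \mathbb{R}^{n\times n}$ be orthogonal with $Q_1 \in \mathbb{R}^{n\times m}$, $Q_2 \in \mathbb{R}^{n\times(n-m)}$, and let $\Xi \in \mathbb{R}^{(n-m)\times n}$ have full row rank. Let $\Xi^\top = Q_{1,X}R_X$ be a QR factorization with $Q_X = [Q_{1,X}\ Q_{2,X}] \in \mathbb{R}^{n\times n}$ orthogonal, $Q_{1,X} \in \mathbb{R}^{n\times(n-m)}$, and $R_X$ invertible upper triangular. Then the matrix $X = Q_1 Q_{2,X}^\top + Q_2 \Xi$ is nonsingular. -/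

import Mathlib

open Matrix

/-- `X = Q₁Q₂ₓᵀ + Q₂Ξ` is nonsingular, where `Ξ` has full row rank,
`Ξᵀ = Q₁ₓRₓ` is a QR factorization, and `[Q₁ Q₂]`, `[Q₁ₓ Q₂ₓ]` are orthogonal. -/
theorem stmt13 {n m k : ℕ} (hk : m + k = n)
    (Q1 : Matrix (Fin n) (Fin m) ℝ) (Q2 : Matrix (Fin n) (Fin k) ℝ)
    (hQ : (fromCols Q1 Q2)ᵀ * fromCols Q1 Q2 = 1)
    (hQ' : fromCols Q1 Q2 * (fromCols Q1 Q2)ᵀ = 1)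
    (Ξ : Matrix (Fin k) (Fin n) ℝ) (hΞ : Ξ.rank = k)
    (Q1X : Matrix (Fin n) (Fin k) ℝ) (Q2X : Matrix (Fin n) (Fin m) ℝ)
    (RX : Matrix (Fin k) (Fin k) ℝ)
    (hQX : (fromCols Q1X Q2X)ᵀ * fromCols Q1X Q2X = 1)
    (hQX' : fromCols Q1X Q2X * (fromCols Q1X Q2X)ᵀ = 1)
    (hRX : IsUnit RX.det) (hRXtri : RX.BlockTriangular id)
    (hQR : Ξᵀ = Q1X * RX) :
    IsUnit (Q1 * Q2Xᵀ + Q2 * Ξ).det := by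
  -- extract orthogonality block relations for QX
  rw [transpose_fromCols, fromRows_mul_fromCols,
    show (1 : Matrix (Fin k ⊕ Fin m) (Fin k ⊕ Fin m) ℝ) = fromBlocks 1 0 0 1 from
      (fromBlocks_one ..).symm, fromBlocks_inj] at hQX
  obtain ⟨h11, h12, h21, h22⟩ := hQX
  -- Ξ in terms of Q1X and RX
  have hΞeq : Ξ = RXᵀ * Q1Xᵀ := by
    have := congrArg transpose hQR
    simpa [transpose_mul] using this
  -- RXᵀ is invertible
  have hRXt : IsUnit RXᵀ.det := by rwa [det_transpose]
  -- explicit right inverse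
  apply isUnit_det_of_right_inverse (B := Q2X * Q1ᵀ + Q1X * (RXᵀ⁻¹ * Q2ᵀ))
  have key : (Q1 * Q2Xᵀ + Q2 * Ξ) * (Q2X * Q1ᵀ + Q1X * (RXᵀ⁻¹ * Q2ᵀ))
      = Q1 * Q1ᵀ + Q2 * Q2ᵀ := by
    rw [hΞeq]
    have e1 : Q2Xᵀ * Q2X = 1 := h22
    have e2 : Q2Xᵀ * Q1X = 0 := h21
    have e3 : Q1Xᵀ * Q2X = 0 := h12
    have e4 : Q1Xᵀ * Q1X = 1 := h11
    have e5 : RXᵀ * RXᵀ⁻¹ = 1 := mul_nonsing_inv _ hRXt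
    calc (Q1 * Q2Xᵀ + Q2 * (RXᵀ * Q1Xᵀ)) * (Q2X * Q1ᵀ + Q1X * (RXᵀ⁻¹ * Q2ᵀ))
        = Q1 * ((Q2Xᵀ * Q2X) * Q1ᵀ) + Q1 * ((Q2Xᵀ * Q1X) * (RXᵀ⁻¹ * Q2ᵀ))
          + Q2 * (RXᵀ * ((Q1Xᵀ * Q2X) * Q1ᵀ))
          + Q2 * ((RXᵀ * ((Q1Xᵀ * Q1X) * RXᵀ⁻¹)) * Q2ᵀ) := by
          simp only [Matrix.add_mul, Matrix.mul_add, Matrix.mul_assoc]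
          abel
      _ = Q1 * Q1ᵀ + Q2 * Q2ᵀ := by
          rw [e1, e2, e3, e4]
          simp [e5]
  rw [key]
  have := hQ'
  rwa [transpose_fromCols, fromCols_mul_fromRows] at this
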